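/- If g ≺' (d, a) and a ≺ â (ordinary majorization of integer sequences of the same length s), then g ≺' (d, â). -/
import Mathlib

/-- Generalized majorization `g ≺' (d, a)` for 1-indexed integer sequences:
`d` of length `m`, `a` of length `s`, `g` of length `m + s`.
Conventions `d i = +∞` for `i < 1` and `d (m+1) = -∞` are encoded in the
definition of the set whose infimum is `h j`. -/
def GenMaj (m s : ℕ) (d a g : ℕ → ℤ) : Prop :=
  (∀ i, 1 ≤ i → i ≤ m → g (i + s) ≤ d i) ∧
  (∀ j, 1 ≤ j → j ≤ s →
    ∑ i ∈ Finset.Icc 1 (sInf {i : ℕ | j ≤ i ∧ (m < i - j + 1 ∨ d (i - j + 1) < g i)}), g i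
      - ∑ i ∈ Finset.Icc 1
          (sInf {i : ℕ | j ≤ i ∧ (m < i - j + 1 ∨ d (i - j + 1) < g i)} - j), d i
      ≤ ∑ i ∈ Finset.Icc 1 j, a i) ∧
  (∑ i ∈ Finset.Icc 1 (m + s), g i
    = ∑ i ∈ Finset.Icc 1 m, d i + ∑ i ∈ Finset.Icc 1 s, a i)

/-- If `g ≺' (d, a)` and `a ≺ â` (ordinary majorization), then `g ≺' (d, â)`. -/
theorem stmt2 (m s : ℕ) (d a ahat g : ℕ → ℤ)
    (hd : ∀ i, 1 ≤ i → i < m → d (i + 1) ≤ d i)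
    (ha : ∀ i, 1 ≤ i → i < s → a (i + 1) ≤ a i)
    (hahat : ∀ i, 1 ≤ i → i < s → ahat (i + 1) ≤ ahat i)
    (hg : ∀ i, 1 ≤ i → i < m + s → g (i + 1) ≤ g i)
    (hmaj : GenMaj m s d a g)
    (hpart : ∀ k, 1 ≤ k → k ≤ s - 1 →
      ∑ i ∈ Finset.Icc 1 k, a i ≤ ∑ i ∈ Finset.Icc 1 k, ahat i)
    (htot : ∑ i ∈ Finset.Icc 1 s, a i = ∑ i ∈ Finset.Icc 1 s, ahat i) :
    GenMaj m s d ahat g := by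
  obtain ⟨h1, h2, h3⟩ := hmaj
  refine ⟨h1, ?_, by rw [h3, htot]⟩
  intro j hj hjs
  have key := h2 j hj hjs
  by_cases hc : j = s
  · subst hc; linarith
  · have hle : j ≤ s - 1 := by omega
    linarith [hpart j hj hle]
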